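/- arXiv:1608.00019 — 2 statements merged into one kernel-verified Lean document; each statement's English description precedes it below -/
import Mathlib

section
/- Let a : Fin n → ℕ (thick-level widths) and b : Fin (n-1) → ℕ (thin-level widths) be such that b_j < a_j and b_j < a_{j+1} for all j (thin levels are strictly smaller than adjacent thick levels) and all values are even. Then the width W = (1/2)(Σ a_i² − Σ b_j²) satisfies W ≥ (max a_i)²/2, i.e., 2W ≥ (trunk)². -/
theorem stmt_7 (n : ℕ) (a : Fin n → ℕ) (b : Fin (n - 1) → ℕ)
    (hadj : ∀ j : Fin (n - 1), b j < a ⟨j.1, by omega⟩ ∧ b j < a ⟨j.1 + 1, by omega⟩)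
    (haeven : ∀ i, Even (a i)) (hbeven : ∀ j, Even (b j)) :
    2 * ((∑ i, (a i) ^ 2 - ∑ j, (b j) ^ 2) / 2) ≥ (Finset.univ.sup a) ^ 2 := by
  rcases n with _ | k
  · simp
  obtain ⟨m, -, hm⟩ := Finset.exists_mem_eq_sup Finset.univ
    ⟨0, Finset.mem_univ (0 : Fin (k + 1))⟩ a
  set f : Fin (k + 1 - 1) → Fin (k + 1) :=
    fun j => if j.1 < m.1 then ⟨j.1, by omega⟩ else ⟨j.1 + 1, by omega⟩ with hf
  have hfinj : Function.Injective f := by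
    intro x y h
    simp only [hf] at h
    split_ifs at h <;> (simp only [Fin.mk.injEq] at h; apply Fin.ext; omega)
  have hb : ∀ j, b j < a (f j) := by
    intro j
    simp only [hf]
    split_ifs with h1
    · exact (hadj j).1
    · exact (hadj j).2
  have hne : ∀ j, f j ≠ m := by
    intro j h
    have hv := congrArg Fin.val h
    simp only [hf] at hv
    split_ifs at hv <;> simp only [Fin.val_mk] at hv <;> omega
  have h1 : ∑ j, (b j) ^ 2 ≤ ∑ j, (a (f j)) ^ 2 :=
    Finset.sum_le_sum fun j _ => Nat.pow_le_pow_left (le_of_lt (hb j)) 2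
  have h2 : ∑ j, (a (f j)) ^ 2 = ∑ i ∈ Finset.univ.image f, (a i) ^ 2 := by
    rw [Finset.sum_image (fun x _ y _ h => hfinj h)]
  have hmnot : m ∉ Finset.univ.image f := by
    simp only [Finset.mem_image]
    rintro ⟨j, -, hj⟩
    exact hne j hj
  have h3 : (a m) ^ 2 + ∑ i ∈ Finset.univ.image f, (a i) ^ 2
      = ∑ i ∈ insert m (Finset.univ.image f), (a i) ^ 2 := by
    rw [Finset.sum_insert hmnot]
  have h4 : ∑ i ∈ insert m (Finset.univ.image f), (a i) ^ 2 ≤ ∑ i, (a i) ^ 2 :=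
    Finset.sum_le_sum_of_subset (Finset.subset_univ _)
  have key : (a m) ^ 2 + ∑ j, (b j) ^ 2 ≤ ∑ i, (a i) ^ 2 := by omega
  have hA : (∑ i, (a i) ^ 2) % 2 = 0 := by
    rw [← Nat.even_iff]
    exact Finset.even_sum _ fun i _ => by
      rw [sq]; exact (haeven i).mul_right _
  have hB : (∑ j, (b j) ^ 2) % 2 = 0 := by
    rw [← Nat.even_iff]
    exact Finset.even_sum _ fun j _ => by
      rw [sq]; exact (hbeven j).mul_right _
  rw [hm]
  omega
end

section
/- Let a : Fin (n+1) → ℕ and b : Fin n → ℕ with a_i ≥ b_j + 2 whenever j ∈ {i−1, i} (adjacency) and all values even and positive. Then (1/2)(Σ a_i² − Σ b_j²) ≥ (1/2)(Σ a_i − Σ b_j) + (max a − 1)·1, i.e., width ≥ bridge number; in fact width ≥ 2·(bridge number). -/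
lemma pair_weak (x y : ℕ) (h : y + 2 ≤ x) : y ^ 2 + x ≤ x ^ 2 + y := by nlinarith
lemma pair_strong (x y : ℕ) (h : y + 2 ≤ x) : y ^ 2 + x + 2 * x ≤ x ^ 2 + y + 2 := by nlinarith
lemma pair_four (x y : ℕ) (h : y + 2 ≤ x) : y ^ 2 + 2 * x ≤ x ^ 2 + 2 * y := by nlinarith
lemma unpaired_strong (x : ℕ) (h : 2 ≤ x) : x + 2 * x ≤ x ^ 2 + 2 := by nlinarith
lemma unpaired_weak (x : ℕ) (h : 2 ≤ x) : 2 * x ≤ x ^ 2 := by nlinarith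

theorem stmt_16 (n : ℕ) (a : Fin (n + 1) → ℕ) (b : Fin n → ℕ)
    (hadj : ∀ j : Fin n, b j + 2 ≤ a j.castSucc ∧ b j + 2 ≤ a j.succ)
    (haeven : ∀ i, Even (a i)) (hbeven : ∀ j, Even (b j))
    (hapos : ∀ i, 0 < a i) :
    (∑ i, (a i) ^ 2 - ∑ j, (b j) ^ 2) / 2 ≥
      (∑ i, a i - ∑ j, b j) / 2 + (Finset.univ.sup a - 1) ∧
    (∑ i, (a i) ^ 2 - ∑ j, (b j) ^ 2) / 2 ≥
      2 * ((∑ i, a i - ∑ j, b j) / 2) := by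
  have ha2 : ∀ i, 2 ≤ a i := by
    intro i
    rcases haeven i with ⟨r, hr⟩
    have := hapos i
    omega
  set A := ∑ i, a i with hA
  set B := ∑ j, b j with hB
  set A2 := ∑ i, (a i) ^ 2 with hA2
  set B2 := ∑ j, (b j) ^ 2 with hB2
  -- splits
  have hAsplit : A = (∑ j : Fin n, a j.castSucc) + a (Fin.last n) := by
    rw [hA, Fin.sum_univ_castSucc]
  have hA2split : A2 = (∑ j : Fin n, (a j.castSucc) ^ 2) + (a (Fin.last n)) ^ 2 := by
    rw [hA2, Fin.sum_univ_castSucc]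
  -- divisibility
  have hdA : 2 ∣ A := Finset.dvd_sum fun i _ => (haeven i).two_dvd
  have hdB : 2 ∣ B := Finset.dvd_sum fun j _ => (hbeven j).two_dvd
  have hdA2 : 2 ∣ A2 := Finset.dvd_sum fun i _ => by
    have : Even ((a i) ^ 2) := by rw [sq]; exact (haeven i).mul_right _
    exact this.two_dvd
  have hdB2 : 2 ∣ B2 := Finset.dvd_sum fun j _ => by
    have : Even ((b j) ^ 2) := by rw [sq]; exact (hbeven j).mul_right _
    exact this.two_dvd
  -- B ≤ A, B2 ≤ A2
  have hBA : B ≤ A := by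
    rw [hAsplit, hB]
    exact le_trans (Finset.sum_le_sum fun j _ => by have := (hadj j).1; omega)
      (Nat.le_add_right _ _)
  have hB2A2 : B2 ≤ A2 := by
    rw [hA2split, hB2]
    refine le_trans (Finset.sum_le_sum fun j _ => ?_) (Nat.le_add_right _ _)
    exact Nat.pow_le_pow_left (by have := (hadj j).1; omega) 2
  -- claim (4): B2 + 2A ≤ A2 + 2B
  have h4 : B2 + 2 * A ≤ A2 + 2 * B := by
    rw [hAsplit, hA2split, hB, hB2]
    have hsum : (∑ j : Fin n, (b j) ^ 2) + 2 * (∑ j : Fin n, a j.castSucc)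
        ≤ (∑ j : Fin n, (a j.castSucc) ^ 2) + 2 * (∑ j : Fin n, b j) := by
      rw [Finset.mul_sum, Finset.mul_sum, ← Finset.sum_add_distrib,
        ← Finset.sum_add_distrib]
      refine Finset.sum_le_sum fun j _ => ?_
      exact pair_four _ _ (hadj j).1
    have hlast := unpaired_weak (a (Fin.last n)) (ha2 _)
    omega
  -- claim (3) at each i : B2 + A + 2 * a i ≤ A2 + B + 2
  have h3 : ∀ i, B2 + A + 2 * a i ≤ A2 + B + 2 := by
    intro i
    rcases i.eq_castSucc_or_eq_last with ⟨j0, rfl⟩ | rfl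
    · rw [hAsplit, hA2split, hB, hB2]
      have hsum : (∑ j : Fin n, (b j) ^ 2) + (∑ j : Fin n, a j.castSucc)
            + 2 * a j0.castSucc
          ≤ (∑ j : Fin n, (a j.castSucc) ^ 2) + (∑ j : Fin n, b j) + 2 := by
        have key : ∑ j : Fin n, ((b j) ^ 2 + a j.castSucc
              + (if j = j0 then 2 * a j.castSucc else 0))
            ≤ ∑ j : Fin n, ((a j.castSucc) ^ 2 + b j + (if j = j0 then 2 else 0)) := by
          refine Finset.sum_le_sum fun j _ => ?_
          by_cases hj : j = j0
          · simp only [hj, if_pos rfl]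
            exact pair_strong _ _ (hadj j0).1
          · simp only [if_neg hj]
            have := pair_weak _ _ (hadj j).1
            omega
        simp only [Finset.sum_add_distrib, Finset.sum_ite_eq' Finset.univ j0,
          Finset.mem_univ, if_pos] at key
        omega
      have hlast : a (Fin.last n) ≤ (a (Fin.last n)) ^ 2 := by
        nlinarith [ha2 (Fin.last n)]
      omega
    · rw [hAsplit, hA2split, hB, hB2]
      have hsum : (∑ j : Fin n, (b j) ^ 2) + (∑ j : Fin n, a j.castSucc)
          ≤ (∑ j : Fin n, (a j.castSucc) ^ 2) + (∑ j : Fin n, b j) := by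
        rw [← Finset.sum_add_distrib, ← Finset.sum_add_distrib]
        exact Finset.sum_le_sum fun j _ => pair_weak _ _ (hadj j).1
      have hlast := unpaired_strong (a (Fin.last n)) (ha2 _)
      omega
  -- get argmax
  obtain ⟨k, -, hk⟩ := Finset.exists_mem_eq_sup Finset.univ Finset.univ_nonempty a
  rw [hk]
  have h3k := h3 k
  have hk2 := ha2 k
  omega
end
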